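/- For every integer n ≥ 2 and every real r > 0, ∫₀^r e^{−(n−1)x/2} (cosh r − cosh x)^{(n−3)/2} dx = 2^{(n−1)/2} · sinh^{n−2}(r) · ∫₀^{1/(1+e^r)} (t(1−t))^{(n−3)/2} dt. -/

import Mathlib

open Real

theorem incomplete_beta_substitution
    (n : ℕ) (hn : 2 ≤ n) (r : ℝ) (hr : 0 < r) :
    ∫ x in (0 : ℝ)..r,
        Real.exp (-((n : ℝ) - 1) * x / 2) * (Real.cosh r - Real.cosh x) ^ (((n : ℝ) - 3) / 2)
      = (2 : ℝ) ^ (((n : ℝ) - 1) / 2) * Real.sinh r ^ (n - 2) *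
        ∫ t in (0 : ℝ)..(1 / (1 + Real.exp r)), (t * (1 - t)) ^ (((n : ℝ) - 3) / 2) := by
  have hexpr : (0:ℝ) < 1 + Real.exp r := by positivity
  have h2 : (0:ℝ) < Real.exp r - Real.exp (-r) := by
    have := Real.exp_lt_exp.mpr (show -r < r by linarith)
    linarith
  set c : ℝ := Real.exp r - Real.exp (-r) with hc
  set p : ℝ := ((n : ℝ) - 3) / 2 with hp
  set f : ℝ → ℝ := fun x => (Real.exp (-x) - Real.exp (-r)) / c with hf
  clear_value c p f
  have hcsinh : Real.sinh r = c / 2 := by rw [hc, Real.sinh_eq]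
  -- derivative
  have hderiv : ∀ x : ℝ, HasDerivAt f (-Real.exp (-x) / c) x := by
    intro x
    rw [hf]
    have h1 : HasDerivAt (fun x : ℝ => Real.exp (-x)) (-Real.exp (-x)) x := by
      simpa [Function.comp_def] using (Real.hasDerivAt_exp (-x)).comp x (hasDerivAt_neg x)
    simpa using (h1.sub_const (Real.exp (-r))).div_const c
  -- injectivity
  have hinj : Set.InjOn f (Set.Ioo 0 r) := by
    intro a _ b _ hab
    rw [hf] at hab
    simp only at hab
    rw [div_eq_div_iff h2.ne' h2.ne'] at hab
    have h : Real.exp (-a) = Real.exp (-b) := by nlinarith [hab]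
    have := Real.exp_injective h
    linarith
  -- f 0 = 1/(1+e^r)
  have hf0 : f 0 = 1 / (1 + Real.exp r) := by
    simp only [hf, neg_zero, Real.exp_zero]
    rw [hc, Real.exp_neg, div_eq_div_iff (by rw [← Real.exp_neg, ← hc]; exact h2.ne') hexpr.ne']
    have := (Real.exp_pos r).ne'
    field_simp
    ring
  -- image
  have himg : f '' Set.Ioo 0 r = Set.Ioo 0 (1 / (1 + Real.exp r)) := by
    ext y
    constructor
    · rintro ⟨x, ⟨hx0, hxr⟩, rfl⟩
      constructor
      · rw [hf]
        apply div_pos _ h2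
        have := Real.exp_lt_exp.mpr (show -r < -x by linarith)
        linarith
      · rw [← hf0, hf]
        simp only
        apply div_lt_div_of_pos_right _ h2
        have := Real.exp_lt_exp.mpr (show -x < -0 by linarith)
        simp only [neg_zero, Real.exp_zero] at this ⊢
        linarith
    · rintro ⟨hy0, hy1⟩
      have hpos : 0 < c * y + Real.exp (-r) :=
        add_pos (mul_pos h2 hy0) (Real.exp_pos _)
      have hgt : Real.exp (-r) < c * y + Real.exp (-r) := by
        nlinarith [mul_pos h2 hy0]
      have hlt1 : c * y + Real.exp (-r) < 1 := by
        have h1 : c * y < c * (1 / (1 + Real.exp r)) :=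
          mul_lt_mul_of_pos_left hy1 h2
        have h3 : c * (1 / (1 + Real.exp r)) + Real.exp (-r) = 1 := by
          rw [hc, Real.exp_neg]
          have := (Real.exp_pos r).ne'
          field_simp
          ring
        linarith
      refine ⟨-Real.log (c * y + Real.exp (-r)), ⟨?_, ?_⟩, ?_⟩
      · have := Real.log_neg hpos hlt1
        linarith
      · have := Real.log_lt_log (Real.exp_pos (-r)) hgt
        rw [Real.log_exp] at this
        linarith
      · simp only [hf, neg_neg, Real.exp_log hpos]
        field_simp
        ring
  have hr1 : (0:ℝ) ≤ 1 / (1 + Real.exp r) := by positivity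
  -- rewrite both integrals as set integrals over Ioo
  rw [intervalIntegral.integral_of_le hr.le, MeasureTheory.integral_Ioc_eq_integral_Ioo,
    intervalIntegral.integral_of_le hr1, MeasureTheory.integral_Ioc_eq_integral_Ioo,
    ← himg,
    MeasureTheory.integral_image_eq_integral_abs_deriv_smul measurableSet_Ioo
      (fun x _ => (hderiv x).hasDerivWithinAt) hinj
      (fun t => (t * (1 - t)) ^ p),
    ← MeasureTheory.integral_const_mul]
  apply MeasureTheory.setIntegral_congr_fun measurableSet_Ioo
  intro x hx
  obtain ⟨hx0, hxr⟩ := hx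
  have hE : 0 < Real.exp (-x) := Real.exp_pos _
  have hA : 0 < Real.cosh r - Real.cosh x := by
    have : Real.cosh x < Real.cosh r := by
      rw [Real.cosh_lt_cosh, abs_of_pos hx0, abs_of_pos hr]
      exact hxr
    linarith
  have habs : |(-Real.exp (-x) / c)| = Real.exp (-x) / c := by
    rw [abs_div, abs_neg, abs_of_pos hE, abs_of_pos h2]
  have hxx : Real.exp (-x) * Real.exp x = 1 := by
    rw [← Real.exp_add]; simp
  have hrr : Real.exp (-r) * Real.exp r = 1 := by
    rw [← Real.exp_add]; simp
  have hkey2 : (Real.exp (-x) - Real.exp (-r)) * (c - (Real.exp (-x) - Real.exp (-r)))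
      = Real.exp (-x) * (2 * (Real.cosh r - Real.cosh x)) := by
    rw [hc, Real.cosh_eq, Real.cosh_eq]
    linear_combination hxx - hrr
  have hfx : f x * (1 - f x) =
      Real.exp (-x) * (2 * (Real.cosh r - Real.cosh x)) / c ^ 2 := by
    rw [hf]
    simp only
    rw [show (Real.exp (-x) - Real.exp (-r)) / c * (1 - (Real.exp (-x) - Real.exp (-r)) / c)
        = ((Real.exp (-x) - Real.exp (-r)) * (c - (Real.exp (-x) - Real.exp (-r)))) / c ^ 2 from by
      field_simp
      try ring
      try exact Or.inl trivial]
    rw [hkey2]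
  -- algebra lemma
  have key : ∀ E A c : ℝ, 0 < E → 0 < A → 0 < c →
      2 ^ (p + 1) * (c / 2) ^ (2 * p + 1) * ((E / c) * (E * (2 * A) / c ^ 2) ^ p)
        = E ^ (p + 1) * A ^ p := by
    intro E A c hE hA hc
    have hc2 : (0:ℝ) < c / 2 := by linarith
    have hB : (0:ℝ) < E * (2 * A) / c ^ 2 := by positivity
    have hbase : 2 * (c / 2) ^ (2:ℝ) * (E * (2 * A) / c ^ 2) = E * A := by
      rw [Real.rpow_two]
      field_simp
    have h4 : E ^ (p + 1) * A ^ p = (E * A) ^ p * E := by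
      rw [Real.mul_rpow hE.le hA.le, Real.rpow_add hE, Real.rpow_one]
      ring
    rw [h4, ← hbase,
      Real.mul_rpow (by positivity) hB.le,
      Real.mul_rpow (by norm_num) (by positivity),
      Real.rpow_add two_pos, Real.rpow_one,
      Real.rpow_add hc2, Real.rpow_one,
      Real.rpow_mul hc2.le 2 p]
    field_simp
  -- exponent bookkeeping
  have hn2 : Real.sinh r ^ (n - 2) = (c / 2) ^ (2 * p + 1) := by
    rw [hcsinh, ← Real.rpow_natCast (c / 2) (n - 2)]
    congr 1
    have h5 : ((n - 2 : ℕ) : ℝ) = (n : ℝ) - 2 := by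
      push_cast [Nat.cast_sub hn]; ring
    rw [h5, hp]; ring
  have hq : ((n : ℝ) - 1) / 2 = p + 1 := by rw [hp]; ring
  have hexp : Real.exp (-((n : ℝ) - 1) * x / 2) = Real.exp (-x) ^ (p + 1) := by
    rw [← Real.exp_mul]
    congr 1
    rw [hp]; ring
  simp only [smul_eq_mul, habs, hfx, hexp, hn2, hq]
  rw [key _ _ _ hE hA h2]
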